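/- Let q be a positive integer, p a prime dividing q, and write q_p = q/p. Let χ be a Dirichlet character modulo q_p, and let χ' be the Dirichlet character modulo q induced by χ (i.e. χ times the principal character modulo q). Then for every integer a with gcd(a,q) = 1: if p² does not divide q, then S(χ, ap) = φ(p)^{-1} · S(χ', ap²); and if p² divides q, then S(χ, ap) = p^{-1} · S(χ', ap²). -/

import Mathlib

open Finset

/-- `S(χ,a) = ∑_{h=1}^{q} conj(χ)(h) e_q(a h²)` for a Dirichlet character χ mod q. -/
noncomputable def Schar {q : ℕ} (χ : DirichletCharacter ℂ q) (a : ℤ) : ℂ :=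
  ∑ h ∈ Finset.Icc 1 q,
    (starRingEnd ℂ) (χ (h : ZMod q)) *
      Complex.exp (2 * (Real.pi : ℂ) * Complex.I * ((a : ℂ) * (h : ℂ) ^ 2) / (q : ℂ))

/-- `B(q, (b₁,b₂,b₃,b₄); χ₁, χ₂, χ₃)
  = φ(q)⁻³ ∑_{1 ≤ a ≤ q, gcd(a,q)=1} S(χ₁,ab₁) S(χ₂,ab₂) S(χ₃,ab₃) e_q(−ab₄)`. -/
noncomputable def Bsum (q : ℕ) (b₁ b₂ b₃ b₄ : ℤ) (χ₁ χ₂ χ₃ : DirichletCharacter ℂ q) : ℂ :=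
  ((q.totient : ℂ))⁻¹ ^ 3 *
    ∑ a ∈ (Finset.Icc 1 q).filter (fun a => Nat.gcd a q = 1),
      Schar χ₁ ((a : ℤ) * b₁) * Schar χ₂ ((a : ℤ) * b₂) * Schar χ₃ ((a : ℤ) * b₃) *
        Complex.exp (-(2 * (Real.pi : ℂ) * Complex.I * ((a : ℂ) * (b₄ : ℂ)) / (q : ℂ)))

private lemma sum_Icc_one_eq_range' (n : ℕ) (f : ℕ → ℂ) (h : f n = f 0) :
    ∑ x ∈ Finset.Icc 1 n, f x = ∑ x ∈ Finset.range n, f x := by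
  have h1 : Finset.range (n + 1) = insert 0 (Finset.Icc 1 n) := by
    ext x; simp only [Finset.mem_range, Finset.mem_insert, Finset.mem_Icc]; omega
  have h0 : (0 : ℕ) ∉ Finset.Icc 1 n := by simp
  have h2 := Finset.sum_range_succ f n
  rw [h1, Finset.sum_insert h0] at h2
  linear_combination h2 + h

private lemma sum_range_mul_split (p m : ℕ) (hm : 0 < m) (f : ℕ → ℂ) :
    ∑ h ∈ Finset.range (p * m), f h
      = ∑ j ∈ Finset.range p, ∑ r ∈ Finset.range m, f (j * m + r) := by
  rw [← Finset.sum_product']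
  refine Finset.sum_nbij' (fun h => (h / m, h % m)) (fun x => x.1 * m + x.2) ?_ ?_ ?_ ?_ ?_
  · intro h hh
    simp only [Finset.mem_range] at hh
    simp only [Finset.mem_product, Finset.mem_range]
    exact ⟨(Nat.div_lt_iff_lt_mul hm).mpr hh, Nat.mod_lt _ hm⟩
  · intro x hx
    simp only [Finset.mem_product, Finset.mem_range] at hx
    simp only [Finset.mem_range]
    calc x.1 * m + x.2 < x.1 * m + m := by omega
      _ = (x.1 + 1) * m := by ring
      _ ≤ p * m := Nat.mul_le_mul_right m hx.1
  · intro h _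
    show h / m * m + h % m = h
    exact Nat.div_add_mod' h m
  · intro x hx
    simp only [Finset.mem_product, Finset.mem_range] at hx
    have h1 : (x.1 * m + x.2) / m = x.1 := by
      rw [mul_comm, Nat.mul_add_div hm, Nat.div_eq_of_lt hx.2, add_zero]
    have h2 : (x.1 * m + x.2) % m = x.2 := by
      rw [mul_comm, Nat.mul_add_mod, Nat.mod_eq_of_lt hx.2]
    show ((x.1 * m + x.2) / m, (x.1 * m + x.2) % m) = x
    rw [h1, h2]
  · intro h _
    show f h = f (h / m * m + h % m)
    rw [Nat.div_add_mod']

private lemma exp_step (a : ℤ) (p m j r : ℕ) (hp : (p : ℂ) ≠ 0) (hm : (m : ℂ) ≠ 0) :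
    Complex.exp (2 * (Real.pi : ℂ) * Complex.I *
        (((a * (p : ℤ) ^ 2 : ℤ) : ℂ) * ((j * m + r : ℕ) : ℂ) ^ 2) / ((p : ℂ) * (m : ℂ)))
      = Complex.exp (2 * (Real.pi : ℂ) * Complex.I *
          (((a * (p : ℤ) : ℤ) : ℂ) * ((r : ℕ) : ℂ) ^ 2) / (m : ℂ)) := by
  have key : 2 * (Real.pi : ℂ) * Complex.I *
        (((a * (p : ℤ) ^ 2 : ℤ) : ℂ) * ((j * m + r : ℕ) : ℂ) ^ 2) / ((p : ℂ) * (m : ℂ))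
      = ((a * (p : ℤ) * ((j : ℤ) ^ 2 * m + 2 * j * r) : ℤ) : ℂ) * (2 * Real.pi * Complex.I)
        + 2 * (Real.pi : ℂ) * Complex.I *
            (((a * (p : ℤ) : ℤ) : ℂ) * ((r : ℕ) : ℂ) ^ 2) / (m : ℂ) := by
    push_cast
    field_simp
    ring
  rw [key, Complex.exp_add, Complex.exp_int_mul_two_pi_mul_I, one_mul]

private lemma exp_endpoint (c : ℤ) (n : ℕ) (hn : (n : ℂ) ≠ 0) :
    Complex.exp (2 * (Real.pi : ℂ) * Complex.I * ((c : ℂ) * ((n : ℕ) : ℂ) ^ 2) / (n : ℂ))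
      = Complex.exp (2 * (Real.pi : ℂ) * Complex.I * ((c : ℂ) * ((0 : ℕ) : ℂ) ^ 2) / (n : ℂ)) := by
  have key : 2 * (Real.pi : ℂ) * Complex.I * ((c : ℂ) * ((n : ℕ) : ℂ) ^ 2) / (n : ℂ)
      = ((c * n : ℤ) : ℂ) * (2 * Real.pi * Complex.I)
        + 2 * (Real.pi : ℂ) * Complex.I * ((c : ℂ) * ((0 : ℕ) : ℂ) ^ 2) / (n : ℂ) := by
    push_cast
    field_simp
    ring
  rw [key, Complex.exp_add, Complex.exp_int_mul_two_pi_mul_I, one_mul]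

private lemma Schar_key (q p m : ℕ) (hq : 0 < q) (hp : p.Prime) (hqm : p * m = q)
    (hdvd : m ∣ q) (χ : DirichletCharacter ℂ m) (a : ℤ) :
    Schar (DirichletCharacter.changeLevel hdvd χ) (a * (p : ℤ) ^ 2)
      = (((if p ∣ m then p else p - 1 : ℕ)) : ℂ) * Schar χ (a * (p : ℤ)) := by
  classical
  have hp0 : 0 < p := hp.pos
  have hm0 : 0 < m := by
    rcases Nat.eq_zero_or_pos m with h | h
    · rw [h, Nat.mul_zero] at hqm; omega
    · exact h
  haveI : NeZero q := ⟨hq.ne'⟩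
  haveI : NeZero m := ⟨hm0.ne'⟩
  haveI : NeZero p := ⟨hp0.ne'⟩
  haveI : Fact p.Prime := ⟨hp⟩
  have hqC : (q : ℂ) = (p : ℂ) * (m : ℂ) := by rw [← hqm]; push_cast; ring
  have hpC : (p : ℂ) ≠ 0 := Nat.cast_ne_zero.2 hp0.ne'
  have hmC : (m : ℂ) ≠ 0 := Nat.cast_ne_zero.2 hm0.ne'
  have hqC0 : (q : ℂ) ≠ 0 := Nat.cast_ne_zero.2 hq.ne'
  set χ' := DirichletCharacter.changeLevel (R := ℂ) hdvd χ with hχ'def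
  set c : ℕ := if p ∣ m then p else p - 1 with hcdef
  -- counting lemma
  have hcount : ∀ r : ℕ, Nat.Coprime r m →
      ((Finset.range p).filter (fun j => ¬ p ∣ (j * m + r))).card = c := by
    intro r hr
    by_cases hpm : p ∣ m
    · have hall : ∀ j ∈ Finset.range p, ¬ p ∣ (j * m + r) := by
        intro j _ hdv
        have hjm : p ∣ j * m := Dvd.dvd.mul_left hpm j
        have hpr : p ∣ r := (Nat.dvd_add_right hjm).mp hdv
        have h1 : p ∣ Nat.gcd r m := Nat.dvd_gcd hpr hpm
        rw [hr] at h1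
        exact absurd (Nat.eq_one_of_dvd_one h1) hp.one_lt.ne'
      rw [Finset.filter_true_of_mem hall, Finset.card_range, hcdef, if_pos hpm]
    · -- exactly one j in range p with p ∣ j*m+r
      have hmZ : (m : ZMod p) ≠ 0 := by
        rw [Ne, ZMod.natCast_eq_zero_iff]
        exact hpm
      set x0 : ZMod p := (-(r : ZMod p)) * (m : ZMod p)⁻¹ with hx0
      have hiff : ∀ j : ℕ, p ∣ (j * m + r) ↔ ((j : ZMod p) = x0) := by
        intro j
        rw [← ZMod.natCast_eq_zero_iff]
        push_cast
        constructor
        · intro h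
          have hjm : (j : ZMod p) * m = -(r : ZMod p) := by linear_combination h
          rw [hx0, ← hjm]
          field_simp
        · intro h
          rw [h, hx0]
          field_simp
          ring
      have hsingle : (Finset.range p).filter (fun j => p ∣ (j * m + r)) = {x0.val} := by
        ext j
        simp only [Finset.mem_filter, Finset.mem_range, Finset.mem_singleton]
        constructor
        · rintro ⟨hj, hdv⟩
          have := (hiff j).mp hdv
          have hv : (j : ZMod p).val = x0.val := by rw [this]
          rwa [ZMod.val_cast_of_lt hj] at hv
        · intro h
          subst h
          refine ⟨ZMod.val_lt x0, (hiff _).mpr ?_⟩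
          exact ZMod.natCast_rightInverse x0
      have hsplit := Finset.card_filter_add_card_filter_not
        (s := Finset.range p) (p := fun j => p ∣ (j * m + r))
      rw [hsingle, Finset.card_singleton, Finset.card_range] at hsplit
      rw [hcdef, if_neg hpm]
      omega
  -- value of χ' on j*m+r
  have hval : ∀ j r : ℕ, χ' ((j * m + r : ℕ) : ZMod q)
      = if ¬ p ∣ (j * m + r) ∧ Nat.Coprime r m then χ ((r : ℕ) : ZMod m) else 0 := by
    intro j r
    by_cases hc1 : ¬ p ∣ (j * m + r) ∧ Nat.Coprime r m
    · obtain ⟨hj, hr⟩ := hc1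
      have hu : IsUnit ((j * m + r : ℕ) : ZMod q) := by
        rw [ZMod.isUnit_iff_coprime, ← hqm, Nat.coprime_mul_iff_right]
        constructor
        · exact Nat.coprime_comm.mp ((Nat.Prime.coprime_iff_not_dvd hp).mpr hj)
        · rw [show j * m + r = r + j * m from by ring]
          exact (Nat.coprime_add_mul_right_left r m j).mpr hr
      have hcl := DirichletCharacter.changeLevel_eq_cast_of_dvd χ hdvd hu.unit
      rw [IsUnit.unit_spec] at hcl
      rw [if_pos ⟨hj, hr⟩, hχ'def, hcl, ZMod.cast_natCast hdvd]
      congr 1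
      push_cast
      simp [ZMod.natCast_self]
    · rw [if_neg hc1]
      apply MulChar.map_nonunit
      rw [ZMod.isUnit_iff_coprime, ← hqm, Nat.coprime_mul_iff_right]
      intro ⟨h1, h2⟩
      apply hc1
      constructor
      · exact (Nat.Prime.coprime_iff_not_dvd hp).mp (Nat.coprime_comm.mp h1)
      · rw [show j * m + r = r + j * m from by ring] at h2
        exact (Nat.coprime_add_mul_right_left r m j).mp h2
  -- inner sum
  have hinner : ∀ r : ℕ,
      (∑ j ∈ Finset.range p, (starRingEnd ℂ) (χ' ((j * m + r : ℕ) : ZMod q)))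
        = (c : ℂ) * (starRingEnd ℂ) (χ ((r : ℕ) : ZMod m)) := by
    intro r
    by_cases hr : Nat.Coprime r m
    · have : ∀ j ∈ Finset.range p, (starRingEnd ℂ) (χ' ((j * m + r : ℕ) : ZMod q))
          = if ¬ p ∣ (j * m + r) then (starRingEnd ℂ) (χ ((r : ℕ) : ZMod m)) else 0 := by
        intro j _
        rw [hval j r]
        by_cases hj : ¬ p ∣ (j * m + r)
        · rw [if_pos ⟨hj, hr⟩, if_pos hj]
        · rw [if_neg (fun hh => hj hh.1), if_neg hj, map_zero]
      rw [Finset.sum_congr rfl this, Finset.sum_ite, Finset.sum_const, Finset.sum_const_zero,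
        add_zero, hcount r hr, nsmul_eq_mul]
    · have hz : χ ((r : ℕ) : ZMod m) = 0 := by
        apply MulChar.map_nonunit
        rw [ZMod.isUnit_iff_coprime]
        exact hr
      have : ∀ j ∈ Finset.range p, (starRingEnd ℂ) (χ' ((j * m + r : ℕ) : ZMod q)) = 0 := by
        intro j _
        rw [hval j r, if_neg (fun hh => hr hh.2), map_zero]
      rw [Finset.sum_congr rfl this, Finset.sum_const_zero, hz, map_zero, mul_zero]
  -- the key identity
  have key : Schar χ' (a * (p : ℤ) ^ 2) = (c : ℂ) * Schar χ (a * (p : ℤ)) := by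
    rw [Schar, Schar]
    rw [sum_Icc_one_eq_range' q _ (by
      rw [Nat.cast_zero, ZMod.natCast_self, exp_endpoint _ _ hqC0, Nat.cast_zero])]
    rw [sum_Icc_one_eq_range' m _ (by
      rw [Nat.cast_zero, ZMod.natCast_self, exp_endpoint _ _ hmC, Nat.cast_zero])]
    have hrange : Finset.range q = Finset.range (p * m) := by rw [hqm]
    rw [hrange, sum_range_mul_split p m hm0]
    have hterm : ∀ j ∈ Finset.range p, ∀ r ∈ Finset.range m,
        (starRingEnd ℂ) (χ' ((j * m + r : ℕ) : ZMod q)) *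
            Complex.exp (2 * (Real.pi : ℂ) * Complex.I *
              (((a * (p : ℤ) ^ 2 : ℤ) : ℂ) * ((j * m + r : ℕ) : ℂ) ^ 2) / (q : ℂ))
          = (starRingEnd ℂ) (χ' ((j * m + r : ℕ) : ZMod q)) *
              Complex.exp (2 * (Real.pi : ℂ) * Complex.I *
                (((a * (p : ℤ) : ℤ) : ℂ) * ((r : ℕ) : ℂ) ^ 2) / (m : ℂ)) := by
      intro j _ r _
      rw [hqC, exp_step a p m j r hpC hmC]
    calc ∑ j ∈ Finset.range p, ∑ r ∈ Finset.range m,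
          (starRingEnd ℂ) (χ' ((j * m + r : ℕ) : ZMod q)) *
            Complex.exp (2 * (Real.pi : ℂ) * Complex.I *
              (((a * (p : ℤ) ^ 2 : ℤ) : ℂ) * ((j * m + r : ℕ) : ℂ) ^ 2) / (q : ℂ))
        = ∑ j ∈ Finset.range p, ∑ r ∈ Finset.range m,
            (starRingEnd ℂ) (χ' ((j * m + r : ℕ) : ZMod q)) *
              Complex.exp (2 * (Real.pi : ℂ) * Complex.I *
                (((a * (p : ℤ) : ℤ) : ℂ) * ((r : ℕ) : ℂ) ^ 2) / (m : ℂ)) := by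
          exact Finset.sum_congr rfl fun j hj => Finset.sum_congr rfl fun r hr => hterm j hj r hr
      _ = ∑ r ∈ Finset.range m, ∑ j ∈ Finset.range p,
            (starRingEnd ℂ) (χ' ((j * m + r : ℕ) : ZMod q)) *
              Complex.exp (2 * (Real.pi : ℂ) * Complex.I *
                (((a * (p : ℤ) : ℤ) : ℂ) * ((r : ℕ) : ℂ) ^ 2) / (m : ℂ)) := Finset.sum_comm
      _ = ∑ r ∈ Finset.range m, (c : ℂ) *
            ((starRingEnd ℂ) (χ ((r : ℕ) : ZMod m)) *
              Complex.exp (2 * (Real.pi : ℂ) * Complex.I *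
                (((a * (p : ℤ) : ℤ) : ℂ) * ((r : ℕ) : ℂ) ^ 2) / (m : ℂ))) := by
          refine Finset.sum_congr rfl fun r _ => ?_
          rw [← Finset.sum_mul, hinner r, mul_assoc]
      _ = (c : ℂ) * ∑ r ∈ Finset.range m,
            (starRingEnd ℂ) (χ ((r : ℕ) : ZMod m)) *
              Complex.exp (2 * (Real.pi : ℂ) * Complex.I *
                (((a * (p : ℤ) : ℤ) : ℂ) * ((r : ℕ) : ℂ) ^ 2) / (m : ℂ)) := by
          rw [Finset.mul_sum]
  exact key

/-- Let p ∣ q be prime, q_p = q/p, χ a Dirichlet character mod q_p and χ' the character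
mod q induced by χ. For every integer a with gcd(a,q) = 1:
if p² ∤ q then S(χ, ap) = φ(p)⁻¹ S(χ', ap²), and if p² ∣ q then S(χ, ap) = p⁻¹ S(χ', ap²). -/
theorem Schar_lift_prime (q p : ℕ) (hq : 0 < q) (hp : p.Prime) (hpq : p ∣ q)
    (χ : DirichletCharacter ℂ (q / p)) (a : ℤ) (ha : Int.gcd a q = 1) :
    (¬ (p ^ 2 ∣ q) →
        Schar χ (a * (p : ℤ)) =
          ((p.totient : ℂ))⁻¹ *
            Schar (DirichletCharacter.changeLevel (Nat.div_dvd_of_dvd hpq) χ)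
              (a * (p : ℤ) ^ 2)) ∧
      ((p ^ 2 ∣ q) →
        Schar χ (a * (p : ℤ)) =
          ((p : ℂ))⁻¹ *
            Schar (DirichletCharacter.changeLevel (Nat.div_dvd_of_dvd hpq) χ)
              (a * (p : ℤ) ^ 2)) := by
  have hp0 : 0 < p := hp.pos
  have hqm : p * (q / p) = q := Nat.mul_div_cancel' hpq
  have hpC : (p : ℂ) ≠ 0 := Nat.cast_ne_zero.2 hp0.ne'
  have key := Schar_key q p (q / p) hq hp hqm (Nat.div_dvd_of_dvd hpq) χ a
  constructor
  · intro h2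
    have hpm : ¬ p ∣ q / p := by
      intro hd
      apply h2
      rw [← hqm, pow_two]
      exact mul_dvd_mul_left p hd
    rw [if_neg hpm] at key
    have hne : ((p - 1 : ℕ) : ℂ) ≠ 0 := by
      rw [Nat.cast_ne_zero]
      have := hp.two_le
      omega
    rw [key, Nat.totient_prime hp, inv_mul_cancel_left₀ hne]
  · intro h2
    have hpm : p ∣ q / p := by
      have : p * p ∣ p * (q / p) := by rw [hqm, ← pow_two]; exact h2
      exact (mul_dvd_mul_iff_left hp0.ne').mp this
    rw [if_pos hpm] at key
    rw [key, inv_mul_cancel_left₀ hpC]
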